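/- Fix m = |M| and k. Consider any deterministic node-oblivious decision rule vector (f, g, h) on the k-ary tree satisfying Assumptions 1, 2 and 3, and let d be the diameter of its dependence graph G. Then there exists a constant C = C(f, m, k) < ∞ such that for all depths t, the probability of error satisfies P(σ_root ≠ s) ≥ exp(−C·n^ρ̄), where n = k^t and ρ̄ = 1 + log(1 − k^{−d})/(d·log k) < 1. -/

import Mathlib

/-!
Node-oblivious deterministic decision rules on the `k`-ary tree: every leaf applies the
same rule `g : X → M` to its private signal (i.i.d. with law `p₀` under `s = 0` and
`p₁` under `s = 1`, both everywhere positive on the finite set `X`), every internal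
non-root node applies the same rule `f : Mᵏ → M` to its children's messages, and the
root applies `h : Mᵏ → Bool`.  The state of the world `s` is uniform on `{0,1}`.

We formalize the subexponential lower bound on the error probability under the three
irreducibility assumptions, in terms of the diameter `d` of the dependence graph.
-/

/-- `p` is an everywhere-positive probability distribution on the finite set `X`. -/
def IsPositiveDist {X : Type} [Fintype X] (p : X → ℝ) : Prop :=
  (∀ x, 0 < p x) ∧ ∑ x, p x = 1

/-- Message distribution at a node of level `τ` (distance `τ` from the leaves) for the
node-oblivious deterministic rule vector with leaf rule `g` and internal rule `f`,
when the private signals are i.i.d. with law `p`. -/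
noncomputable def oblDist {X M : Type} [Fintype X] [Fintype M] [DecidableEq M] {k : ℕ}
    (p : X → ℝ) (g : X → M) (f : (Fin k → M) → M) : ℕ → M → ℝ
  | 0, μ => ∑ x, if g x = μ then p x else 0
  | τ + 1, μ => ∑ σ : Fin k → M, if f σ = μ then ∏ i, oblDist p g f τ (σ i) else 0

/-- Root error probability `P(σ_root ≠ s)` (uniform prior on `s`) for the
node-oblivious protocol `(f, g, h)`; the root's children are at level `t`, so the
total depth is `t + 1` and there are `n = k^(t+1)` private signals. -/
noncomputable def oblErr {X M : Type} [Fintype X] [Fintype M] [DecidableEq M] {k : ℕ}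
    (p₀ p₁ : X → ℝ) (g : X → M) (f : (Fin k → M) → M) (h : (Fin k → M) → Bool)
    (t : ℕ) : ℝ :=
  (1 / 2) * (∑ σ : Fin k → M, if h σ = true then ∏ i, oblDist p₀ g f t (σ i) else 0) +
  (1 / 2) * (∑ σ : Fin k → M, if h σ = false then ∏ i, oblDist p₁ g f t (σ i) else 0)

/-- The dependence graph of `f`: there is a directed edge from `μ` to `ν` iff there is
an input vector `α ∈ Mᵏ` in which `ν` appears at least once and `f α = μ`. -/
def DepEdge {M : Type} {k : ℕ} (f : (Fin k → M) → M) (μ ν : M) : Prop :=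
  ∃ α : Fin k → M, (∃ i, α i = ν) ∧ f α = μ

/-- `HasPath f n μ ν`: the dependence graph of `f` contains a directed path with
exactly `n` edges from `μ` to `ν`. -/
def HasPath {M : Type} {k : ℕ} (f : (Fin k → M) → M) : ℕ → M → M → Prop
  | 0, μ, ν => μ = ν
  | n + 1, μ, ν => ∃ ξ, DepEdge f μ ξ ∧ HasPath f n ξ ν

/-- `d` is the diameter of the dependence graph of `f`: every ordered pair of distinct
vertices is joined by a directed path of length at most `d`, and some ordered pair of
distinct vertices has no directed path of length less than `d`. -/
def IsDiameter {M : Type} {k : ℕ} (f : (Fin k → M) → M) (d : ℕ) : Prop :=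
  (∀ μ ν : M, μ ≠ ν → ∃ n, n ≤ d ∧ HasPath f n μ ν) ∧
  (∃ μ ν : M, μ ≠ ν ∧ ∀ n, n < d → ¬HasPath f n μ ν)

section aux
variable {X M : Type} [Fintype X] [Fintype M] [DecidableEq M] {k : ℕ}
variable (p : X → ℝ) (g : X → M) (f : (Fin k → M) → M)

lemma sum_ite_pos_iff {α : Type} [Fintype α] (P : α → Prop) [DecidablePred P] (w : α → ℝ)
    (hw : ∀ a, 0 ≤ w a) :
    (0 < ∑ a, if P a then w a else 0) ↔ ∃ a, P a ∧ 0 < w a := by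
  constructor
  · intro hpos
    obtain ⟨a, -, ha⟩ := Finset.exists_ne_zero_of_sum_ne_zero (ne_of_gt hpos)
    by_cases hPa : P a
    · exact ⟨a, hPa, lt_of_le_of_ne (hw a) (by simpa [hPa] using ha.symm)⟩
    · simp [hPa] at ha
  · rintro ⟨a, hPa, ha⟩
    have h1 : (if P a then w a else 0) ≤ ∑ b, if P b then w b else 0 :=
      Finset.single_le_sum (f := fun b => if P b then w b else 0)
        (fun b _ => by (try dsimp only); split
                       · exact hw b
                       · exact le_refl 0) (Finset.mem_univ a)
    simp only [hPa, if_pos] at h1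
    calc (0:ℝ) < w a := ha
      _ = (if P a then w a else 0) := by simp [hPa]
      _ ≤ _ := Finset.single_le_sum (f := fun b => if P b then w b else 0)
        (fun b _ => by (try dsimp only); split
                       · exact hw b
                       · exact le_refl 0) (Finset.mem_univ a)

lemma oblDist_nonneg (hp : ∀ x, 0 ≤ p x) : ∀ τ μ, 0 ≤ oblDist p g f τ μ := by
  intro τ
  induction τ with
  | zero => intro μ; apply Finset.sum_nonneg; intro x _; split <;> simp [hp x]
  | succ τ ih =>
    intro μ
    apply Finset.sum_nonneg; intro σ _
    split
    · exact Finset.prod_nonneg fun i _ => ih (σ i)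
    · exact le_refl 0

lemma oblDist_succ (τ : ℕ) (μ : M) :
    oblDist p g f (τ+1) μ = ∑ σ : Fin k → M, if f σ = μ then ∏ i, oblDist p g f τ (σ i) else 0 := rfl

lemma oblDist_sum_one (hp : IsPositiveDist p) : ∀ τ, ∑ μ, oblDist p g f τ μ = 1 := by
  intro τ
  induction τ with
  | zero =>
    show ∑ μ, ∑ x, (if g x = μ then p x else 0) = 1
    rw [Finset.sum_comm]
    have : ∀ x : X, ∑ μ, (if g x = μ then p x else 0) = p x := by
      intro x; simp
    simp only [this]; exact hp.2
  | succ τ ih =>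
    simp only [oblDist_succ]
    rw [Finset.sum_comm]
    have : ∀ σ : Fin k → M, ∑ μ, (if f σ = μ then ∏ i, oblDist p g f τ (σ i) else 0)
        = ∏ i, oblDist p g f τ (σ i) := by intro σ; simp
    simp only [this]
    rw [← Fintype.sum_pow (fun μ => oblDist p g f τ μ) k, ih, one_pow]

lemma oblDist_le_one (hp : IsPositiveDist p) (τ : ℕ) (μ : M) : oblDist p g f τ μ ≤ 1 := by
  have h1 := oblDist_sum_one p g f hp τ
  have := Finset.single_le_sum (f := fun μ => oblDist p g f τ μ)
    (fun ν _ => oblDist_nonneg p g f (fun x => (hp.1 x).le) τ ν) (Finset.mem_univ μ)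
  linarith

lemma step_le (hp : ∀ x, 0 ≤ p x) (τ : ℕ) (α : Fin k → M) :
    (∏ i, oblDist p g f τ (α i)) ≤ oblDist p g f (τ+1) (f α) := by
  rw [oblDist_succ]
  calc (∏ i, oblDist p g f τ (α i))
      = (if f α = f α then ∏ i, oblDist p g f τ (α i) else 0) := by simp
    _ ≤ _ := Finset.single_le_sum
        (f := fun σ => if f σ = f α then ∏ i, oblDist p g f τ (σ i) else 0)
        (fun σ _ => by (try dsimp only); split
                       · exact Finset.prod_nonneg fun i _ => oblDist_nonneg p g f hp τ (σ i)
                       · exact le_refl 0) (Finset.mem_univ α)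

/-- Combinatorial reachability of a message at level `τ`. -/
def Reach (g : X → M) (f : (Fin k → M) → M) : ℕ → M → Prop
  | 0, μ => ∃ x, g x = μ
  | τ + 1, μ => ∃ σ : Fin k → M, f σ = μ ∧ ∀ i, Reach g f τ (σ i)

lemma prod_pos_iff {α : Type} [Fintype α] (w : α → ℝ) (hw : ∀ a, 0 ≤ w a) :
    (0 < ∏ a, w a) ↔ ∀ a, 0 < w a := by
  constructor
  · intro hp a
    rcases lt_or_eq_of_le (hw a) with h | h
    · exact h
    · exfalso
      rw [← Finset.prod_eq_zero (Finset.mem_univ a) h.symm] at hp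
      exact lt_irrefl _ hp
  · intro h; exact Finset.prod_pos fun a _ => h a

lemma oblDist_pos_iff (hp : ∀ x, 0 < p x) :
    ∀ τ μ, (0 < oblDist p g f τ μ ↔ Reach g f τ μ) := by
  intro τ
  induction τ with
  | zero =>
    intro μ
    show (0 < ∑ x, if g x = μ then p x else 0) ↔ _
    rw [sum_ite_pos_iff _ p (fun x => (hp x).le)]
    constructor
    · rintro ⟨x, hx, -⟩; exact ⟨x, hx⟩
    · rintro ⟨x, hx⟩; exact ⟨x, hx, hp x⟩
  | succ τ ih =>
    intro μ
    rw [oblDist_succ, sum_ite_pos_iff _ _ (fun σ =>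
      Finset.prod_nonneg fun i _ => oblDist_nonneg p g f (fun x => (hp x).le) τ (σ i))]
    constructor
    · rintro ⟨σ, hσ, hpos⟩
      refine ⟨σ, hσ, fun i => ?_⟩
      rw [← ih]
      exact (prod_pos_iff _ (fun i => oblDist_nonneg p g f (fun x => (hp x).le) τ (σ i))).mp hpos i
    · rintro ⟨σ, hσ, hr⟩
      exact ⟨σ, hσ, Finset.prod_pos fun i _ => (ih (σ i)).mpr (hr i)⟩

lemma exists_oblDist_pos (hp : IsPositiveDist p) : ∀ τ, ∃ μ, 0 < oblDist p g f τ μ := by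
  intro τ
  by_contra hc
  push_neg at hc
  have hle : ∑ μ, oblDist p g f τ μ ≤ 0 := Finset.sum_nonpos fun μ _ => hc μ
  rw [oblDist_sum_one p g f hp τ] at hle
  norm_num at hle


section xm
variable [Nonempty M]

/-- Minimum message probability at level `τ`. -/
noncomputable def xm (p : X → ℝ) (g : X → M) (f : (Fin k → M) → M) (τ : ℕ) : ℝ :=
  Finset.univ.inf' Finset.univ_nonempty (oblDist p g f τ)

lemma xm_le (τ : ℕ) (μ : M) : xm p g f τ ≤ oblDist p g f τ μ :=
  Finset.inf'_le _ (Finset.mem_univ μ)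

lemma xm_nonneg (hp : ∀ x, 0 ≤ p x) (τ : ℕ) : 0 ≤ xm p g f τ := by
  rw [xm, Finset.le_inf'_iff]
  exact fun μ _ => oblDist_nonneg p g f hp τ μ

lemma xm_le_one (hp : IsPositiveDist p) (τ : ℕ) : xm p g f τ ≤ 1 := by
  obtain ⟨μ⟩ := ‹Nonempty M›
  exact (xm_le p g f τ μ).trans (oblDist_le_one p g f hp τ μ)

lemma xm_pos (τ : ℕ) (h : ∀ μ, 0 < oblDist p g f τ μ) : 0 < xm p g f τ := by
  rw [xm, Finset.lt_inf'_iff]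
  exact fun μ _ => h μ

lemma xm_step (hp : ∀ x, 0 ≤ p x) (hin : ∀ μ : M, ∃ α, f α = μ) (τ : ℕ) :
    xm p g f τ ^ k ≤ xm p g f (τ + 1) := by
  rw [show xm p g f (τ+1) = Finset.univ.inf' Finset.univ_nonempty (oblDist p g f (τ+1)) from rfl,
    Finset.le_inf'_iff]
  intro μ _
  obtain ⟨α, hα⟩ := hin μ
  calc xm p g f τ ^ k = ∏ _i : Fin k, xm p g f τ := by
        rw [Finset.prod_const, Finset.card_univ, Fintype.card_fin]
    _ ≤ ∏ i, oblDist p g f τ (α i) :=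
        Finset.prod_le_prod (fun i _ => xm_nonneg p g f hp τ) (fun i _ => xm_le p g f τ (α i))
    _ ≤ oblDist p g f (τ+1) (f α) := step_le p g f hp τ α
    _ = oblDist p g f (τ+1) μ := by rw [hα]

lemma xm_iter (hp : ∀ x, 0 ≤ p x) (hin : ∀ μ : M, ∃ α, f α = μ) (τ : ℕ) :
    ∀ j, xm p g f τ ^ (k ^ j) ≤ xm p g f (τ + j) := by
  intro j
  induction j with
  | zero => simpa using le_refl (xm p g f τ)
  | succ j ih =>
    have hx0 : (0:ℝ) ≤ xm p g f τ := xm_nonneg p g f hp τ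
    calc xm p g f τ ^ (k ^ (j+1)) = (xm p g f τ ^ (k ^ j)) ^ k := by
          rw [← pow_mul, pow_succ]
      _ ≤ xm p g f (τ + j) ^ k := pow_le_pow_left₀ (by positivity) ih k
      _ ≤ xm p g f (τ + j + 1) := xm_step p g f hp hin (τ + j)

end xm
end aux

section path
variable {X M : Type} [Fintype X] [Fintype M] [DecidableEq M] {k : ℕ} [Nonempty M]
variable (p : X → ℝ) (g : X → M) (f : (Fin k → M) → M)

lemma path_bound (hp : ∀ x, 0 ≤ p x) (hin : ∀ μ : M, ∃ α, f α = μ) (hk1 : 1 ≤ k) (τ : ℕ) :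
    ∀ n (μ ν : M), HasPath f n μ ν →
      oblDist p g f τ ν * xm p g f τ ^ (k ^ n - 1) ≤ oblDist p g f (τ + n) μ := by
  intro n
  induction n with
  | zero =>
    intro μ ν hpath
    cases hpath
    simp
  | succ n ih =>
    intro μ ν hpath
    obtain ⟨ξ, ⟨α, ⟨i₀, hi₀⟩, hfα⟩, hrest⟩ := hpath
    have hq0 : ∀ τ' μ', (0:ℝ) ≤ oblDist p g f τ' μ' := oblDist_nonneg p g f hp
    have hx0 : (0:ℝ) ≤ xm p g f τ := xm_nonneg p g f hp τ
    have hcard : (Finset.univ.erase i₀).card = k - 1 := by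
      rw [Finset.card_erase_of_mem (Finset.mem_univ i₀), Finset.card_univ, Fintype.card_fin]
    have hsplit : ∏ i, oblDist p g f (τ + n) (α i)
        = oblDist p g f (τ + n) (α i₀) * ∏ i ∈ Finset.univ.erase i₀, oblDist p g f (τ + n) (α i) :=
      (Finset.mul_prod_erase Finset.univ _ (Finset.mem_univ i₀)).symm
    have herase : (xm p g f τ ^ (k ^ n)) ^ (k - 1)
        ≤ ∏ i ∈ Finset.univ.erase i₀, oblDist p g f (τ + n) (α i) := by
      calc (xm p g f τ ^ (k ^ n)) ^ (k-1)
          = ∏ _i ∈ Finset.univ.erase i₀, xm p g f τ ^ (k ^ n) := by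
            rw [Finset.prod_const, hcard]
        _ ≤ _ := Finset.prod_le_prod (fun i _ => by positivity)
            (fun i _ => (xm_iter p g f hp hin τ n).trans (xm_le p g f (τ + n) (α i)))
    have hmain : oblDist p g f τ ν * xm p g f τ ^ (k ^ n - 1) * (xm p g f τ ^ (k ^ n)) ^ (k - 1)
        ≤ ∏ i, oblDist p g f (τ + n) (α i) := by
      rw [hsplit, hi₀]
      exact mul_le_mul (ih ξ ν hrest) herase (by positivity)
        (hq0 _ _)
    have hexp : oblDist p g f τ ν * xm p g f τ ^ (k ^ n - 1) * (xm p g f τ ^ (k ^ n)) ^ (k - 1)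
        = oblDist p g f τ ν * xm p g f τ ^ (k ^ (n+1) - 1) := by
      rw [mul_assoc, ← pow_mul, ← pow_add]
      congr 2
      have h1 : 1 ≤ k ^ n := Nat.one_le_pow _ _ hk1
      have h2 : k ^ (n+1) = k ^ n * k := pow_succ k n
      rw [h2]
      generalize k ^ n = a at h1 ⊢
      have h4 : a * (k - 1) = a * k - a := by
        cases k with
        | zero => omega
        | succ k' => rw [Nat.succ_sub_one, Nat.mul_succ]; omega
      have h5 : a ≤ a * k := Nat.le_mul_of_pos_right a (by omega)
      omega
    calc oblDist p g f τ ν * xm p g f τ ^ (k ^ (n+1) - 1)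
        = oblDist p g f τ ν * xm p g f τ ^ (k ^ n - 1) * (xm p g f τ ^ (k ^ n)) ^ (k - 1) :=
          hexp.symm
      _ ≤ ∏ i, oblDist p g f (τ + n) (α i) := hmain
      _ ≤ oblDist p g f (τ + n + 1) (f α) := step_le p g f hp (τ + n) α
      _ = oblDist p g f (τ + (n+1)) μ := by rw [hfα]; rfl

end path

section err
variable {X M : Type} [Fintype X] [Fintype M] [DecidableEq M] {k : ℕ}
variable (p₀ p₁ : X → ℝ) (g : X → M) (f : (Fin k → M) → M) (h : (Fin k → M) → Bool)

lemma err_ge (hp₀ : ∀ x, 0 ≤ p₀ x) (hp₁ : ∀ x, 0 ≤ p₁ x) (t : ℕ) (σs : Fin k → M) :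
    (1/2) * min (∏ i, oblDist p₀ g f t (σs i)) (∏ i, oblDist p₁ g f t (σs i))
      ≤ oblErr p₀ p₁ g f h t := by
  have hS₀ : (0:ℝ) ≤ ∑ σ : Fin k → M, if h σ = true then ∏ i, oblDist p₀ g f t (σ i) else 0 :=
    Finset.sum_nonneg fun σ _ => by
      split
      · exact Finset.prod_nonneg fun i _ => oblDist_nonneg p₀ g f hp₀ t (σ i)
      · exact le_refl 0
  have hS₁ : (0:ℝ) ≤ ∑ σ : Fin k → M, if h σ = false then ∏ i, oblDist p₁ g f t (σ i) else 0 :=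
    Finset.sum_nonneg fun σ _ => by
      split
      · exact Finset.prod_nonneg fun i _ => oblDist_nonneg p₁ g f hp₁ t (σ i)
      · exact le_refl 0
  rcases Bool.eq_false_or_eq_true (h σs) with hb | hb
  · have hterm : (∏ i, oblDist p₀ g f t (σs i))
        ≤ ∑ σ : Fin k → M, if h σ = true then ∏ i, oblDist p₀ g f t (σ i) else 0 := by
      calc (∏ i, oblDist p₀ g f t (σs i))
          = (if h σs = true then ∏ i, oblDist p₀ g f t (σs i) else 0) := by rw [if_pos hb]
        _ ≤ _ := Finset.single_le_sum
            (f := fun σ => if h σ = true then ∏ i, oblDist p₀ g f t (σ i) else 0)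
            (fun σ _ => by (try dsimp only); split
                           · exact Finset.prod_nonneg fun i _ => oblDist_nonneg p₀ g f hp₀ t (σ i)
                           · exact le_refl 0) (Finset.mem_univ σs)
    have : min (∏ i, oblDist p₀ g f t (σs i)) (∏ i, oblDist p₁ g f t (σs i))
        ≤ ∏ i, oblDist p₀ g f t (σs i) := min_le_left _ _
    unfold oblErr
    nlinarith [this.trans hterm]
  · have hterm : (∏ i, oblDist p₁ g f t (σs i))
        ≤ ∑ σ : Fin k → M, if h σ = false then ∏ i, oblDist p₁ g f t (σ i) else 0 := by
      calc (∏ i, oblDist p₁ g f t (σs i))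
          = (if h σs = false then ∏ i, oblDist p₁ g f t (σs i) else 0) := by rw [if_pos hb]
        _ ≤ _ := Finset.single_le_sum
            (f := fun σ => if h σ = false then ∏ i, oblDist p₁ g f t (σ i) else 0)
            (fun σ _ => by (try dsimp only); split
                           · exact Finset.prod_nonneg fun i _ => oblDist_nonneg p₁ g f hp₁ t (σ i)
                           · exact le_refl 0) (Finset.mem_univ σs)
    have : min (∏ i, oblDist p₀ g f t (σs i)) (∏ i, oblDist p₁ g f t (σs i))
        ≤ ∏ i, oblDist p₁ g f t (σs i) := min_le_right _ _
    unfold oblErr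
    nlinarith [this.trans hterm]

lemma oblErr_pos (hp₀ : IsPositiveDist p₀) (hp₁ : IsPositiveDist p₁) (t : ℕ) :
    0 < oblErr p₀ p₁ g f h t := by
  obtain ⟨μ, hμ⟩ := exists_oblDist_pos p₀ g f hp₀ t
  have hμ' : 0 < oblDist p₁ g f t μ := by
    rw [oblDist_pos_iff p₁ g f hp₁.1]
    rw [oblDist_pos_iff p₀ g f hp₀.1] at hμ
    exact hμ
  have h0 : (0:ℝ) < (1/2) * min (∏ _i : Fin k, oblDist p₀ g f t μ)
      (∏ _i : Fin k, oblDist p₁ g f t μ) := by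
    have h1 : (0:ℝ) < ∏ _i : Fin k, oblDist p₀ g f t μ := Finset.prod_pos fun _ _ => hμ
    have h2 : (0:ℝ) < ∏ _i : Fin k, oblDist p₁ g f t μ := Finset.prod_pos fun _ _ => hμ'
    have := lt_min h1 h2
    linarith
  exact h0.trans_le (err_ge p₀ p₁ g f h (fun x => (hp₀.1 x).le) (fun x => (hp₁.1 x).le) t (fun _ => μ))

end err

section contract
variable {X M : Type} [Fintype X] [Fintype M] [DecidableEq M] {k : ℕ} [Nonempty M]
variable (p : X → ℝ) (g : X → M) (f : (Fin k → M) → M)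

lemma xm_contract (hp : IsPositiveDist p) (hin : ∀ μ : M, ∃ α, f α = μ) (hk1 : 1 ≤ k)
    (d : ℕ) (μm : M)
    (hpaths : ∀ μ : M, ∃ n, n ≤ d ∧ HasPath f n μ μm)
    (η : ℝ) (hη0 : 0 ≤ η) (τ : ℕ) (hηbd : ∀ τ', τ ≤ τ' → η ≤ oblDist p g f τ' μm) :
    η * xm p g f τ ^ (k ^ d - 1) ≤ xm p g f (τ + d) := by
  have hp0 : ∀ x, (0:ℝ) ≤ p x := fun x => (hp.1 x).le
  have hx0 : (0:ℝ) ≤ xm p g f τ := xm_nonneg p g f hp0 τ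
  have hx1 : xm p g f τ ≤ 1 := xm_le_one p g f hp τ
  rw [show xm p g f (τ+d) = Finset.univ.inf' Finset.univ_nonempty (oblDist p g f (τ+d)) from rfl,
    Finset.le_inf'_iff]
  intro μ _
  obtain ⟨n, hnd, hpath⟩ := hpaths μ
  set τ' := τ + (d - n) with hτ'
  have hτn : τ' + n = τ + d := by omega
  have hb := path_bound p g f hp0 hin hk1 τ' n μ μm hpath
  rw [hτn] at hb
  have hexp : k ^ (d - n) * (k ^ n - 1) ≤ k ^ d - 1 := by
    have hab : k ^ (d - n) * k ^ n = k ^ d := by rw [← pow_add]; congr 1; omega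
    have h1a : 1 ≤ k ^ (d - n) := Nat.one_le_pow _ _ (by omega)
    have h1b : 1 ≤ k ^ n := Nat.one_le_pow _ _ (by omega)
    obtain ⟨b', hb'⟩ : ∃ b', k ^ n = b' + 1 := ⟨k ^ n - 1, by omega⟩
    rw [hb'] at hab ⊢
    rw [Nat.add_sub_cancel, Nat.mul_succ] at *
    generalize k ^ (d - n) * b' = m at hab ⊢
    omega
  have hpowchain : xm p g f τ ^ (k ^ d - 1) ≤ xm p g f τ' ^ (k ^ n - 1) := by
    calc xm p g f τ ^ (k ^ d - 1)
        ≤ xm p g f τ ^ (k ^ (d - n) * (k ^ n - 1)) :=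
          pow_le_pow_of_le_one hx0 hx1 hexp
      _ = (xm p g f τ ^ (k ^ (d - n))) ^ (k ^ n - 1) := pow_mul _ _ _
      _ ≤ xm p g f τ' ^ (k ^ n - 1) :=
          pow_le_pow_left₀ (by positivity) (xm_iter p g f hp0 hin τ (d - n)) _
  calc η * xm p g f τ ^ (k ^ d - 1)
      ≤ oblDist p g f τ' μm * xm p g f τ' ^ (k ^ n - 1) :=
        mul_le_mul (hηbd τ' (by omega)) hpowchain (by positivity)
          (oblDist_nonneg p g f hp0 τ' μm)
    _ ≤ oblDist p g f (τ + d) μ := hb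

end contract

set_option maxHeartbeats 1600000 in
/-- **Subexponential decay for irreducible node-oblivious rules.**  Fix the finite
message alphabet `M` (of size `m`) and `k ≥ 2`.  Consider a deterministic
node-oblivious rule vector `(f, g, h)` with everywhere-positive signal distributions
`p₀, p₁`, satisfying the three irreducibility assumptions:
(1) the dependence graph of `f` is strongly connected;
(2) at some level `τ₀ > 0`, every message has positive probability under `H₀`;
(3) there are messages `μ₋, μ₊` and `η > 0` such that at every level `τ > τ_d`,
`P(σ_i = μ₋ | s = 0) > η` and `P(σ_i = μ₊ | s = 1) > η`.
Let `d` be the diameter of the dependence graph (with `k^d > 2`).  Then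
`ρ̄ = 1 + log (1 - k^{-d}) / (d log k) < 1`, and there is a constant `C < ∞`
(depending on `f`, `m`, `k`) such that for every total depth `t + 1`,
`P(σ_root ≠ s) ≥ exp (-C n^ρ̄)` with `n = k^(t+1)` the number of private signals. -/
theorem node_oblivious_subexponential_lower_bound
    (X M : Type) [Fintype X] [Fintype M] [DecidableEq M]
    (k : ℕ) (hk : 2 ≤ k)
    (p₀ p₁ : X → ℝ) (hp₀ : IsPositiveDist p₀) (hp₁ : IsPositiveDist p₁)
    (g : X → M) (f : (Fin k → M) → M) (h : (Fin k → M) → Bool)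
    (d : ℕ) (hdiam : IsDiameter f d) (hkd : 2 < k ^ d)
    (hA1 : ∀ μ ν : M, μ ≠ ν → ∃ n, HasPath f n μ ν)
    (τ₀ : ℕ) (hτ₀ : 0 < τ₀) (hA2 : ∀ μ : M, 0 < oblDist p₀ g f τ₀ μ)
    (μm μp : M) (η : ℝ) (hη : 0 < η) (τd : ℕ)
    (hA3 : ∀ τ, τd < τ → η < oblDist p₀ g f τ μm ∧ η < oblDist p₁ g f τ μp) :
    1 + Real.log (1 - ((k : ℝ) ^ d)⁻¹) / ((d : ℝ) * Real.log k) < 1 ∧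
    ∃ C : ℝ, ∀ t : ℕ,
      Real.exp (-C * ((k : ℝ) ^ (t + 1)) ^
          (1 + Real.log (1 - ((k : ℝ) ^ d)⁻¹) / ((d : ℝ) * Real.log k))) ≤
        oblErr p₀ p₁ g f h t := by
  have hk0 : 0 < k := by omega
  have hk1 : 1 ≤ k := by omega
  have hd1 : 1 ≤ d := by
    rcases Nat.eq_zero_or_pos d with rfl | hd; · simp at hkd
    · exact hd
  have hkR : (1:ℝ) < (k:ℝ) := by exact_mod_cast hk
  have hkdR : (2:ℝ) < (k:ℝ) ^ d := by exact_mod_cast hkd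
  obtain ⟨μ0, ν0, hμν0, -⟩ := hdiam.2
  haveI : Nonempty M := ⟨μ0⟩
  have hp₀0 : ∀ x, (0:ℝ) ≤ p₀ x := fun x => (hp₀.1 x).le
  have hp₁0 : ∀ x, (0:ℝ) ≤ p₁ x := fun x => (hp₁.1 x).le
  -- every message has an incoming edge
  have hin : ∀ μ : M, ∃ α, f α = μ := by
    intro μ
    obtain ⟨ν, hν⟩ : ∃ ν : M, μ ≠ ν := by
      by_cases hc : μ = μ0
      · exact ⟨ν0, hc ▸ hμν0⟩
      · exact ⟨μ0, hc⟩
    obtain ⟨n, hp⟩ := hA1 μ ν hν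
    cases n with
    | zero => exact absurd hp hν
    | succ n =>
      obtain ⟨ξ, ⟨α, -, hfα⟩, -⟩ := hp
      exact ⟨α, hfα⟩
  -- the exponent ρ
  set ρ := 1 + Real.log (1 - ((k : ℝ) ^ d)⁻¹) / ((d : ℝ) * Real.log k) with hρdef
  have hlogk : 0 < Real.log k := Real.log_pos hkR
  have hD : 0 < (d:ℝ) * Real.log k := by positivity
  have hinv1 : ((k:ℝ) ^ d)⁻¹ < 1 := by
    rw [inv_lt_one_iff₀]; right; linarith
  have hinv0 : 0 < ((k:ℝ) ^ d)⁻¹ := by positivity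
  have hρlt : ρ < 1 := by
    have hlneg : Real.log (1 - ((k:ℝ) ^ d)⁻¹) < 0 :=
      Real.log_neg (by linarith) (by linarith)
    have := div_neg_of_neg_of_pos hlneg hD
    rw [hρdef]; linarith
  refine ⟨hρlt, ?_⟩
  -- alternative expression for ρ
  have hKcast : ((k ^ d - 1 : ℕ) : ℝ) = (k:ℝ) ^ d - 1 := by
    push_cast [Nat.cast_sub (Nat.one_le_pow _ _ hk0)]; ring
  have hρeq : ρ = Real.log ((k:ℝ) ^ d - 1) / ((d:ℝ) * Real.log k) := by
    rw [hρdef]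
    have h1 : (d:ℝ) * Real.log k = Real.log ((k:ℝ) ^ d) := by
      rw [Real.log_pow]
    have h2 : Real.log ((k:ℝ) ^ d) + Real.log (1 - ((k:ℝ) ^ d)⁻¹)
        = Real.log ((k:ℝ) ^ d * (1 - ((k:ℝ) ^ d)⁻¹)) := by
      rw [Real.log_mul (by positivity) (by linarith)]
    have h3 : (k:ℝ) ^ d * (1 - ((k:ℝ) ^ d)⁻¹) = (k:ℝ) ^ d - 1 := by
      field_simp
    rw [← h3, ← h2, ← h1]
    field_simp
  have hρpos : 0 < ρ := by
    rw [hρeq]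
    exact div_pos (Real.log_pos (by linarith)) hD
  -- threshold level
  set T := max τ₀ (τd + 1) with hTdef
  have hTτd : τd < T := lt_of_lt_of_le (Nat.lt_succ_self τd) (le_max_right _ _)
  have hT1 : 1 ≤ T := le_trans hτ₀ (le_max_left _ _)
  have hτ₀T : τ₀ ≤ T := le_max_left _ _
  have hxmT : 0 < xm p₀ g f T := by
    have h0 : 0 < xm p₀ g f τ₀ := xm_pos p₀ g f τ₀ hA2
    have h2 := xm_iter p₀ g f hp₀0 hin τ₀ (T - τ₀)
    rw [show τ₀ + (T - τ₀) = T by omega] at h2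
    calc (0:ℝ) < xm p₀ g f τ₀ ^ (k ^ (T - τ₀)) := by positivity
      _ ≤ xm p₀ g f T := h2
  set K := k ^ d - 1 with hKdef
  have hK2 : 2 ≤ K := by omega
  have hKR2 : (2:ℝ) ≤ (K:ℝ) := by exact_mod_cast hK2
  set η₁ := min η 1 with hη₁def
  set B₀ := min (xm p₀ g f T) 1 with hB₀def
  set c₁ := η₁ * B₀ with hc₁def
  have hη₁0 : 0 < η₁ := lt_min hη one_pos
  have hη₁1 : η₁ ≤ 1 := min_le_right _ _
  have hB₀0 : 0 < B₀ := lt_min hxmT one_pos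
  have hB₀1 : B₀ ≤ 1 := min_le_right _ _
  have hc₁0 : 0 < c₁ := mul_pos hη₁0 hB₀0
  have hc₁1 : c₁ ≤ 1 := by nlinarith
  -- contraction step
  have hcontract : ∀ τ, T ≤ τ → η * xm p₀ g f τ ^ K ≤ xm p₀ g f (τ + d) := by
    intro τ hτ
    apply xm_contract p₀ g f hp₀ hin hk1 d μm ?_ η hη.le τ ?_
    · intro μ
      by_cases hc : μ = μm
      · exact ⟨0, Nat.zero_le d, by rw [hc]; exact rfl⟩
      · exact hdiam.1 μ μm hc
    · intro τ' hτ'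
      exact (hA3 τ' (by omega)).1.le
  -- the auxiliary exponent sequence
  set e : ℕ → ℕ := fun i => Nat.rec 0 (fun _ a => K * a + 1) i with hedef
  have he0 : e 0 = 0 := rfl
  have hes : ∀ i, e (i + 1) = K * e i + 1 := fun i => rfl
  have he : ∀ i, e i + 1 ≤ K ^ i := by
    intro i
    induction i with
    | zero => simp [he0]
    | succ i ih =>
      rw [hes, pow_succ]
      have h1 : K * (e i + 1) ≤ K * K ^ i := Nat.mul_le_mul_left K ih
      calc K * e i + 1 + 1 = K * e i + 2 := by omega
        _ ≤ K * e i + K := by omega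
        _ = K * (e i + 1) := by ring
        _ ≤ K * K ^ i := h1
        _ = K ^ i * K := Nat.mul_comm _ _
  -- the main recursion along multiples of d above level T
  have hrec : ∀ i, η₁ ^ (e i) * B₀ ^ (K ^ i) ≤ xm p₀ g f (T + i * d) := by
    intro i
    induction i with
    | zero =>
      simp only [he0, pow_zero, one_mul, pow_one, Nat.zero_mul, Nat.add_zero]
      exact min_le_left _ _
    | succ i ih =>
      have hstep := hcontract (T + i * d) (Nat.le_add_right _ _)
      have hpow : (η₁ ^ (e i) * B₀ ^ (K ^ i)) ^ K ≤ xm p₀ g f (T + i * d) ^ K :=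
        pow_le_pow_left₀ (by positivity) ih K
      have hid : η₁ ^ (e (i+1)) * B₀ ^ (K ^ (i+1)) = η₁ * ((η₁ ^ (e i) * B₀ ^ (K ^ i)) ^ K) := by
        rw [hes i, pow_succ K i]
        ring
      calc η₁ ^ (e (i+1)) * B₀ ^ (K ^ (i+1))
          = η₁ * ((η₁ ^ (e i) * B₀ ^ (K ^ i)) ^ K) := hid
        _ ≤ η₁ * xm p₀ g f (T + i * d) ^ K :=
            mul_le_mul_of_nonneg_left hpow hη₁0.le
        _ ≤ η * xm p₀ g f (T + i * d) ^ K :=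
            mul_le_mul_of_nonneg_right (min_le_left _ _)
              (pow_nonneg (xm_nonneg p₀ g f hp₀0 _) K)
        _ ≤ xm p₀ g f (T + i * d + d) := hstep
        _ = xm p₀ g f (T + (i+1) * d) := by rw [show T + i*d + d = T + (i+1)*d by ring]
  have hxc : ∀ i, c₁ ^ (K ^ i) ≤ xm p₀ g f (T + i * d) := by
    intro i
    calc c₁ ^ (K ^ i) = η₁ ^ (K ^ i) * B₀ ^ (K ^ i) := mul_pow _ _ _
      _ ≤ η₁ ^ (e i) * B₀ ^ (K ^ i) :=
          mul_le_mul_of_nonneg_right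
            (pow_le_pow_of_le_one hη₁0.le hη₁1 (by have := he i; omega))
            (by positivity)
      _ ≤ xm p₀ g f (T + i * d) := hrec i
  -- rpow facts
  have hnρ : ∀ t : ℕ, ((k:ℝ) ^ (t+1)) ^ ρ = Real.exp (((t+1 : ℕ) : ℝ) * Real.log k * ρ) := by
    intro t
    rw [Real.rpow_def_of_pos (by positivity), Real.log_pow]
  have h1ρ : ∀ t : ℕ, (1:ℝ) ≤ ((k:ℝ) ^ (t+1)) ^ ρ := by
    intro t
    rw [hnρ t]
    apply Real.one_le_exp
    positivity
  have hKi : ∀ t i : ℕ, i * d ≤ t + 1 → ((K:ℝ)) ^ i ≤ ((k:ℝ) ^ (t+1)) ^ ρ := by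
    intro t i hid
    have hKR0 : (0:ℝ) < (K:ℝ) := by linarith
    have hlogK : 0 < Real.log (K:ℝ) := Real.log_pos (by linarith)
    rw [hnρ t]
    have h1 : ((K:ℝ)) ^ i = Real.exp ((i:ℝ) * Real.log (K:ℝ)) := by
      rw [Real.exp_nat_mul, Real.exp_log hKR0]
    rw [h1]
    apply Real.exp_le_exp.mpr
    have h2 : ((t+1 : ℕ):ℝ) * Real.log k * ρ = ((t+1 : ℕ):ℝ) / (d:ℝ) * Real.log (K:ℝ) := by
      rw [hρeq, hKcast]
      have hd0 : ((d:ℝ)) ≠ 0 := by positivity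
      field_simp
    rw [h2]
    apply mul_le_mul_of_nonneg_right ?_ hlogK.le
    rw [le_div_iff₀ (by positivity : (0:ℝ) < (d:ℝ))]
    calc (i:ℝ) * (d:ℝ) = ((i * d : ℕ) : ℝ) := by push_cast; ring
      _ ≤ ((t+1 : ℕ):ℝ) := by exact_mod_cast hid
  -- error lower bound for t ≥ T
  set L := -Real.log c₁ with hLdef
  have hL0 : 0 ≤ L := by
    have := Real.log_nonpos hc₁0.le hc₁1
    rw [hLdef]; linarith
  have hc₁exp : ∀ m : ℕ, c₁ ^ m = Real.exp (-((m:ℝ) * L)) := by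
    intro m
    rw [hLdef]
    rw [show -((m:ℝ) * -Real.log c₁) = (m:ℝ) * Real.log c₁ by ring]
    rw [Real.exp_nat_mul, Real.exp_log hc₁0]
  set C₁ := (k:ℝ) ^ (d+1) * L with hC₁def
  have hC₁0 : 0 ≤ C₁ := by positivity
  have hbig : ∀ t : ℕ, T ≤ t →
      Real.exp (-(C₁ + Real.log 2) * ((k:ℝ) ^ (t+1)) ^ ρ) ≤ oblErr p₀ p₁ g f h t := by
    intro t hTt
    obtain ⟨i, r, hrd, hdecomp⟩ : ∃ i r, r < d ∧ t = T + i * d + r := by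
      have hmod := Nat.div_add_mod (t - T) d
      refine ⟨(t - T)/d, (t - T) % d, Nat.mod_lt _ (by omega), ?_⟩
      rw [mul_comm]
      generalize d * ((t - T)/d) = a at hmod ⊢
      omega
    -- minimum message probability at level t
    have hxmt : c₁ ^ (K ^ i * k ^ d) ≤ xm p₀ g f t := by
      have h1 := xm_iter p₀ g f hp₀0 hin (T + i * d) r
      rw [show T + i * d + r = t by omega] at h1
      have h2 : (c₁ ^ (K ^ i)) ^ (k ^ r) ≤ xm p₀ g f (T + i * d) ^ (k ^ r) :=
        pow_le_pow_left₀ (by positivity) (hxc i) _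
      calc c₁ ^ (K ^ i * k ^ d) ≤ c₁ ^ (K ^ i * k ^ r) :=
            pow_le_pow_of_le_one hc₁0.le hc₁1
              (Nat.mul_le_mul_left _ (Nat.pow_le_pow_right hk0 hrd.le))
        _ = (c₁ ^ (K ^ i)) ^ (k ^ r) := pow_mul _ _ _
        _ ≤ xm p₀ g f (T + i * d) ^ (k ^ r) := h2
        _ ≤ xm p₀ g f t := h1
    set N := K ^ i * k ^ (d+1) with hNdef
    have hNeq : N = (K ^ i * k ^ d) * k := by rw [hNdef, pow_succ]; ring
    -- product bounds
    have hprod₀ : c₁ ^ N ≤ ∏ _j : Fin k, oblDist p₀ g f t μp := by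
      rw [Finset.prod_const, Finset.card_univ, Fintype.card_fin, hNeq, pow_mul]
      exact pow_le_pow_left₀ (by positivity)
        (hxmt.trans (xm_le p₀ g f t μp)) k
    have hprod₁ : c₁ ^ N ≤ ∏ _j : Fin k, oblDist p₁ g f t μp := by
      rw [Finset.prod_const, Finset.card_univ, Fintype.card_fin]
      have hη₁le : η₁ ≤ oblDist p₁ g f t μp :=
        (min_le_left η 1).trans (hA3 t (by omega)).2.le
      calc c₁ ^ N ≤ c₁ ^ k :=
            pow_le_pow_of_le_one hc₁0.le hc₁1
              (by
                have h1 : 1 ≤ K ^ i := Nat.one_le_pow _ _ (by omega)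
                have h2 : k ≤ k ^ (d+1) := by
                  calc k = k ^ 1 := (pow_one k).symm
                    _ ≤ k ^ (d+1) := Nat.pow_le_pow_right hk0 (by omega)
                calc k ≤ k ^ (d+1) := h2
                  _ ≤ K ^ i * k ^ (d+1) := Nat.le_mul_of_pos_left _ h1)
        _ ≤ η₁ ^ k := pow_le_pow_left₀ hc₁0.le (by nlinarith [hη₁0, hB₀1, hB₀0, hη₁1]) k
        _ ≤ oblDist p₁ g f t μp ^ k := pow_le_pow_left₀ hη₁0.le hη₁le k
    have herr : (1/2) * c₁ ^ N ≤ oblErr p₀ p₁ g f h t := by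
      have := err_ge p₀ p₁ g f h hp₀0 hp₁0 t (fun _ => μp)
      have hmin : c₁ ^ N ≤ min (∏ _j : Fin k, oblDist p₀ g f t μp)
          (∏ _j : Fin k, oblDist p₁ g f t μp) := le_min hprod₀ hprod₁
      calc (1/2) * c₁ ^ N
          ≤ (1/2) * min (∏ _j : Fin k, oblDist p₀ g f t μp)
              (∏ _j : Fin k, oblDist p₁ g f t μp) := by linarith
        _ ≤ _ := this
    -- convert to exponential form
    have hidt : i * d ≤ t + 1 := by omega
    have hNle : (N:ℝ) * L ≤ C₁ * ((k:ℝ) ^ (t+1)) ^ ρ := by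
      have h1 : (N:ℝ) = (K:ℝ) ^ i * (k:ℝ) ^ (d+1) := by
        rw [hNdef]; push_cast; ring
      rw [h1, hC₁def]
      have h2 := hKi t i hidt
      have h3 : (0:ℝ) ≤ (k:ℝ) ^ (d+1) := by positivity
      nlinarith [h1ρ t, hL0, h3, mul_le_mul_of_nonneg_right h2 (mul_nonneg h3 hL0)]
    calc Real.exp (-(C₁ + Real.log 2) * ((k:ℝ) ^ (t+1)) ^ ρ)
        = Real.exp (-(C₁ * ((k:ℝ) ^ (t+1)) ^ ρ) - Real.log 2 * ((k:ℝ) ^ (t+1)) ^ ρ) := by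
          ring_nf
      _ ≤ Real.exp (-((N:ℝ) * L) - Real.log 2) := by
          apply Real.exp_le_exp.mpr
          have hlog2 : 0 < Real.log 2 := Real.log_pos (by norm_num)
          have := h1ρ t
          nlinarith [hNle]
      _ = (1/2) * c₁ ^ N := by
          rw [Real.exp_sub, hc₁exp N, Real.exp_log (by norm_num : (0:ℝ) < 2)]
          ring
      _ ≤ oblErr p₀ p₁ g f h t := herr
  -- the final constant
  have hrange : (Finset.range T).Nonempty := ⟨0, Finset.mem_range.mpr (by omega)⟩
  set C := max (C₁ + Real.log 2)
    ((Finset.range T).sup' hrange (fun t' => -Real.log (oblErr p₀ p₁ g f h t'))) with hCdef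
  have hC1 : C₁ + Real.log 2 ≤ C := le_max_left _ _
  have hC0 : 0 < C := by
    have hlog2 : 0 < Real.log 2 := Real.log_pos (by norm_num)
    calc (0:ℝ) < C₁ + Real.log 2 := by linarith
      _ ≤ C := hC1
  refine ⟨C, fun t => ?_⟩
  by_cases hTt : T ≤ t
  · calc Real.exp (-C * ((k:ℝ) ^ (t+1)) ^ ρ)
        ≤ Real.exp (-(C₁ + Real.log 2) * ((k:ℝ) ^ (t+1)) ^ ρ) := by
          apply Real.exp_le_exp.mpr
          have h1 := h1ρ t
          nlinarith [hC1]
      _ ≤ oblErr p₀ p₁ g f h t := hbig t hTt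
  · push_neg at hTt
    have herr0 : 0 < oblErr p₀ p₁ g f h t := oblErr_pos p₀ p₁ g f h hp₀ hp₁ t
    have hC2 : -Real.log (oblErr p₀ p₁ g f h t) ≤ C :=
      le_trans (Finset.le_sup' (f := fun t' => -Real.log (oblErr p₀ p₁ g f h t'))
        (Finset.mem_range.mpr hTt)) (le_max_right _ _)
    calc Real.exp (-C * ((k:ℝ) ^ (t+1)) ^ ρ)
        ≤ Real.exp (-C) := by
          apply Real.exp_le_exp.mpr
          have h1 := h1ρ t
          nlinarith
      _ ≤ Real.exp (Real.log (oblErr p₀ p₁ g f h t)) := by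
          apply Real.exp_le_exp.mpr; linarith
      _ = oblErr p₀ p₁ g f h t := Real.exp_log herr0
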